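/- Suppose f is odd. If ℓ > 3, then the 2^f residue classes n_B mod ℓ^f − 1, as B runs over all subsets of {0,1,…,f−1}, are pairwise distinct. If ℓ = 2 or ℓ = 3, then n_{{0,…,f−1}} ≡ n_∅ (mod ℓ^f − 1) and this is the only coincidence: for any two distinct subsets B₁ ≠ B₂, one has n_{B₁} ≡ n_{B₂} (mod ℓ^f − 1) if and only if {B₁,B₂} = {∅, {0,…,f−1}}. -/

import Mathlib

namespace Stmt12

/-- `n_B = ∑_{i∈B} ℓ^{i+1} − ∑_{i∉B} ℓ^i`. -/
def nB (ℓ f : ℕ) (B : Finset (Fin f)) : ℤ :=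
  ∑ i ∈ B, (ℓ : ℤ) ^ ((i : ℕ) + 1) - ∑ i ∈ Bᶜ, (ℓ : ℤ) ^ (i : ℕ)

/-- Subset sum of powers of `ℓ`. -/
def sN (ℓ f : ℕ) (B : Finset (Fin f)) : ℕ := ∑ i ∈ B, ℓ ^ (i : ℕ)

lemma sN_injective {ℓ f : ℕ} (hℓ : 2 ≤ ℓ) : Function.Injective (sN ℓ f) := by
  intro B₁ B₂ h
  have key : ∀ B : Finset (Fin f),
      sN ℓ f B = ∑ i ∈ B.map ⟨Fin.val, Fin.val_injective⟩, ℓ ^ i := by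
    intro B; rw [Finset.sum_map]; rfl
  rw [key, key] at h
  exact Finset.map_injective _ (Finset.geomSum_injective hℓ h)

lemma sN_le {ℓ f : ℕ} (B : Finset (Fin f)) : sN ℓ f B ≤ sN ℓ f Finset.univ :=
  Finset.sum_le_sum_of_subset (Finset.subset_univ B)

lemma sN_univ_eq {ℓ f : ℕ} : (sN ℓ f Finset.univ : ℤ) = ∑ i ∈ Finset.range f, (ℓ : ℤ) ^ i := by
  unfold sN; push_cast
  rw [Fin.sum_univ_eq_sum_range (fun i => (ℓ : ℤ) ^ i)]

lemma geom_mul {ℓ f : ℕ} : (sN ℓ f Finset.univ : ℤ) * ((ℓ : ℤ) - 1) = (ℓ : ℤ) ^ f - 1 := by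
  rw [sN_univ_eq, geom_sum_mul]

lemma mn_eq {ℓ f : ℕ} (hℓ : 2 ≤ ℓ) : ℓ ^ f - 1 = sN ℓ f Finset.univ * (ℓ - 1) := by
  have h1 : 1 ≤ ℓ ^ f := Nat.one_le_pow _ _ (by omega)
  have := @geom_mul ℓ f
  have hcast : ((sN ℓ f Finset.univ * (ℓ - 1) : ℕ) : ℤ) = ((ℓ ^ f - 1 : ℕ) : ℤ) := by
    push_cast [Nat.cast_sub (by omega : 1 ≤ ℓ), Nat.cast_sub h1]
    rw [this]
  omega

lemma nB_eq {ℓ f : ℕ} (B : Finset (Fin f)) :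
    nB ℓ f B = ((ℓ : ℤ) + 1) * (sN ℓ f B : ℤ) - (sN ℓ f Finset.univ : ℤ) := by
  unfold nB
  have h1 : ∑ i ∈ Bᶜ, (ℓ:ℤ)^(i:ℕ) = ∑ i : Fin f, (ℓ:ℤ)^(i:ℕ) - ∑ i ∈ B, (ℓ:ℤ)^(i:ℕ) := by
    rw [eq_sub_iff_add_eq, Finset.sum_compl_add_sum]
  rw [h1]
  unfold sN
  push_cast
  rw [show ∀ B : Finset (Fin f), ∑ i ∈ B, (ℓ:ℤ)^((i:ℕ)+1) = ∑ i ∈ B, (ℓ:ℤ)^(i:ℕ) * ℓ from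
    fun B => Finset.sum_congr rfl (fun i _ => pow_succ _ _)]
  rw [← Finset.sum_mul]
  ring

lemma core {ℓ f : ℕ} (hℓ : ℓ.Prime) (hf : 0 < f) (hfo : Odd f) (a b : ℕ)
    (ha : a ≤ sN ℓ f Finset.univ) (hb : b ≤ sN ℓ f Finset.univ)
    (hdvd : ((ℓ:ℤ)^f - 1) ∣ ((ℓ:ℤ)+1) * ((b:ℤ) - (a:ℤ))) :
    (3 < ℓ → a = b) ∧
    ((ℓ = 2 ∨ ℓ = 3) → a = b ∨
      (a = 0 ∧ b = sN ℓ f Finset.univ) ∨ (a = sN ℓ f Finset.univ ∧ b = 0)) := by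
  have hℓ2 : 2 ≤ ℓ := hℓ.two_le
  set T := sN ℓ f Finset.univ with hT
  have hT1 : 1 ≤ T := by
    have : (⟨0, hf⟩ : Fin f) ∈ Finset.univ := Finset.mem_univ _
    calc 1 ≤ ℓ ^ ((⟨0, hf⟩ : Fin f) : ℕ) := Nat.one_le_pow _ _ (by omega)
      _ ≤ T := Finset.single_le_sum (f := fun i : Fin f => ℓ ^ (i : ℕ))
        (fun i _ => Nat.zero_le _) this
  set mn := ℓ ^ f - 1 with hmn
  have h1p : 1 ≤ ℓ ^ f := Nat.one_le_pow _ _ (by omega)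
  have hmncast : ((mn : ℕ) : ℤ) = (ℓ:ℤ)^f - 1 := by
    push_cast [hmn, Nat.cast_sub h1p]; ring
  have hmnT : mn = T * (ℓ - 1) := mn_eq hℓ2
  have hxT : ((b:ℤ) - (a:ℤ)).natAbs ≤ T := by omega
  have hdvdN : mn ∣ (ℓ + 1) * ((b:ℤ) - (a:ℤ)).natAbs := by
    rw [← hmncast] at hdvd
    have h := Int.natAbs_dvd_natAbs.mpr hdvd
    rwa [Int.natAbs_natCast, Int.natAbs_mul,
      show ((ℓ:ℤ)+1).natAbs = ℓ + 1 by omega] at h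
  set g := Nat.gcd (ℓ + 1) mn with hg
  have hgpos : 0 < g := Nat.gcd_pos_of_pos_left _ (by omega)
  have hg2 : g ∣ 2 := by
    have h1 : (ℓ + 1) ∣ ℓ ^ f + 1 := by
      have := Odd.nat_add_dvd_pow_add_pow ℓ 1 hfo
      simpa using this
    have hga : g ∣ ℓ ^ f + 1 := (Nat.gcd_dvd_left _ _).trans h1
    have hgb : g ∣ mn := Nat.gcd_dvd_right _ _
    have := Nat.dvd_sub hga hgb
    rwa [show ℓ ^ f + 1 - mn = 2 by omega] at this
  have hdvd2 : mn / g ∣ ((b:ℤ) - (a:ℤ)).natAbs := by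
    have hco : Nat.Coprime ((ℓ+1)/g) (mn/g) := Nat.coprime_div_gcd_div_gcd hgpos
    have hmng : g * (mn / g) = mn := Nat.mul_div_cancel' (Nat.gcd_dvd_right _ _)
    have hlg : g * ((ℓ+1) / g) = ℓ + 1 := Nat.mul_div_cancel' (Nat.gcd_dvd_left _ _)
    have h : g * (mn / g) ∣ g * (((ℓ+1)/g) * ((b:ℤ) - (a:ℤ)).natAbs) := by
      rw [hmng, ← Nat.mul_assoc, hlg]; exact hdvdN
    exact hco.symm.dvd_of_dvd_mul_left ((Nat.mul_dvd_mul_iff_left hgpos).mp h)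
  constructor
  · intro h3
    by_contra hab
    have hx0 : 0 < ((b:ℤ) - (a:ℤ)).natAbs := by omega
    have hle : mn / g ≤ ((b:ℤ) - (a:ℤ)).natAbs := Nat.le_of_dvd hx0 hdvd2
    have hmng : (mn / g) * g = mn := Nat.div_mul_cancel (Nat.gcd_dvd_right _ _)
    have : mn < mn := by
      calc mn = (mn / g) * g := hmng.symm
        _ ≤ ((b:ℤ) - (a:ℤ)).natAbs * 2 := Nat.mul_le_mul hle (Nat.le_of_dvd (by omega) hg2)
        _ < T * 3 := by omega
        _ ≤ T * (ℓ - 1) := Nat.mul_le_mul_left T (by omega)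
        _ = mn := hmnT.symm
    omega
  · intro h23
    have hTg : mn / g = T := by
      rcases h23 with h | h
      · subst h
        have hg3 : g ∣ 3 := Nat.gcd_dvd_left _ _
        have hg1 : g = 1 := Nat.eq_one_of_dvd_one (by
          have : g ∣ Nat.gcd 2 3 := Nat.dvd_gcd hg2 hg3
          simpa using this)
        rw [hg1, Nat.div_one, hmnT]; norm_num
      · subst h
        have h2g : 2 ∣ g := Nat.dvd_gcd (by omega) (by omega)
        have hg' : g = 2 := Nat.dvd_antisymm hg2 h2g
        rw [hg', hmnT]; omega
    rw [hTg] at hdvd2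
    rcases Nat.eq_zero_or_pos ((b:ℤ) - (a:ℤ)).natAbs with h0 | hpos
    · left; omega
    · have hTx : T ≤ ((b:ℤ) - (a:ℤ)).natAbs := Nat.le_of_dvd hpos hdvd2
      right; omega

lemma hconv {ℓ f : ℕ} (h23 : ℓ = 2 ∨ ℓ = 3) :
    ((ℓ:ℤ)^f - 1) ∣ ((ℓ:ℤ)+1) * (sN ℓ f Finset.univ : ℤ) := by
  rw [← geom_mul]
  rcases h23 with h | h <;> subst h
  · exact ⟨3, by ring⟩
  · exact ⟨2, by ring⟩

lemma cong_iff {ℓ f : ℕ} (B₁ B₂ : Finset (Fin f)) :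
    Int.ModEq ((ℓ:ℤ)^f - 1) (nB ℓ f B₁) (nB ℓ f B₂) ↔
      ((ℓ:ℤ)^f - 1) ∣ ((ℓ:ℤ)+1) * ((sN ℓ f B₂ : ℤ) - (sN ℓ f B₁ : ℤ)) := by
  rw [Int.modEq_iff_dvd, nB_eq, nB_eq]
  constructor <;> intro h <;> [skip; skip] <;>
    · have := h
      rw [show ((ℓ:ℤ)+1) * (sN ℓ f B₂ : ℤ) - (sN ℓ f Finset.univ : ℤ) -
          (((ℓ:ℤ)+1) * (sN ℓ f B₁ : ℤ) - (sN ℓ f Finset.univ : ℤ)) =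
          ((ℓ:ℤ)+1) * ((sN ℓ f B₂ : ℤ) - (sN ℓ f B₁ : ℤ)) by ring] at *
      assumption

theorem stmt12 (ℓ f : ℕ) (hℓ : ℓ.Prime) (hf : 0 < f) (hfo : Odd f)
    (h2 : 2 < ℓ ^ f) :
    (3 < ℓ → ∀ B₁ B₂ : Finset (Fin f),
      Int.ModEq ((ℓ : ℤ) ^ f - 1) (nB ℓ f B₁) (nB ℓ f B₂) → B₁ = B₂) ∧
    ((ℓ = 2 ∨ ℓ = 3) →
      Int.ModEq ((ℓ : ℤ) ^ f - 1) (nB ℓ f Finset.univ) (nB ℓ f ∅) ∧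
      (∀ B₁ B₂ : Finset (Fin f), B₁ ≠ B₂ →
        (Int.ModEq ((ℓ : ℤ) ^ f - 1) (nB ℓ f B₁) (nB ℓ f B₂) ↔
          ((B₁ = ∅ ∧ B₂ = Finset.univ) ∨ (B₁ = Finset.univ ∧ B₂ = ∅))))) := by
  have hℓ2 : 2 ≤ ℓ := hℓ.two_le
  have hsempty : sN ℓ f ∅ = 0 := by simp [sN]
  constructor
  · intro h3 B₁ B₂ hmod
    have h := (core hℓ hf hfo (sN ℓ f B₁) (sN ℓ f B₂) (sN_le B₁) (sN_le B₂)
      ((cong_iff B₁ B₂).mp hmod)).1 h3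
    exact sN_injective hℓ2 h
  · intro h23
    constructor
    · apply (cong_iff _ _).mpr
      rw [hsempty]
      have := hconv (f := f) h23
      push_cast
      rw [show ((ℓ:ℤ)+1) * ((0:ℤ) - (sN ℓ f Finset.univ : ℤ)) =
        -(((ℓ:ℤ)+1) * (sN ℓ f Finset.univ : ℤ)) by ring]
      exact dvd_neg.mpr this
    · intro B₁ B₂ hne
      constructor
      · intro hmod
        have h := (core hℓ hf hfo (sN ℓ f B₁) (sN ℓ f B₂) (sN_le B₁) (sN_le B₂)
          ((cong_iff B₁ B₂).mp hmod)).2 h23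
        rcases h with h | ⟨h1, h2'⟩ | ⟨h1, h2'⟩
        · exact absurd (sN_injective hℓ2 h) hne
        · left
          refine ⟨sN_injective hℓ2 (by rw [h1, hsempty]), sN_injective hℓ2 h2'⟩
        · right
          refine ⟨sN_injective hℓ2 h1, sN_injective hℓ2 (by rw [h2', hsempty])⟩
      · rintro (⟨rfl, rfl⟩ | ⟨rfl, rfl⟩) <;> apply (cong_iff _ _).mpr <;>
            rw [hsempty] <;> push_cast
        · rw [show ((ℓ:ℤ)+1) * ((sN ℓ f Finset.univ : ℤ) - 0) =
            ((ℓ:ℤ)+1) * (sN ℓ f Finset.univ : ℤ) by ring]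
          exact hconv h23
        · rw [show ((ℓ:ℤ)+1) * ((0:ℤ) - (sN ℓ f Finset.univ : ℤ)) =
            -(((ℓ:ℤ)+1) * (sN ℓ f Finset.univ : ℤ)) by ring]
          exact dvd_neg.mpr (hconv h23)

end Stmt12
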